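/- Let R be a commutative ring of prime characteristic p, let e ≥ 1 be an integer, let φ be a p^e-linear map on R, and let a ⊆ R be an ideal with φ(a) ⊆ a. Then: (i) for every ideal b ⊆ R one has φ(a : b) ⊆ a : b, where a : b = {x ∈ R : x·b ⊆ a}; and (ii) if R is noetherian, then φ(q) ⊆ q for every associated prime q of R/a, and φ(√a) ⊆ √a. -/

import Mathlib

/-- `φ` is a `p^e`-linear map: an additive map with `φ (a^(p^e) * b) = a * φ b`. -/
def IsPLinearMap (p e : ℕ) {R : Type*} [CommRing R] (φ : R →+ R) : Prop :=
  ∀ a b : R, φ (a ^ p ^ e * b) = a * φ b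

section Aux

variable {p e : ℕ} {R : Type*} [CommRing R] (φ : R →+ R)

lemma colon_aux (hp : 0 < p) (hφ : IsPLinearMap p e φ) (a : Ideal R)
    (ha : ∀ x ∈ a, φ x ∈ a) (b : Ideal R) : ∀ x ∈ a.colon b, φ x ∈ a.colon b := by
  intro x hx
  rw [Submodule.mem_colon] at hx ⊢
  intro y hy
  have hq : 0 < p ^ e := pow_pos hp e
  have h1 : y ^ p ^ e ∈ b := Ideal.pow_mem_of_mem b hy _ hq
  have h2 : x * y ^ p ^ e ∈ a := hx _ h1
  have h3 : φ (y ^ p ^ e * x) ∈ a := by rw [mul_comm]; exact ha _ h2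
  rw [hφ] at h3
  rwa [smul_eq_mul, mul_comm]

lemma pow_aux (hp : 0 < p) (hφ : IsPLinearMap p e φ) (n : ℕ) :
    ∀ a : Ideal R, (∀ x ∈ a, φ x ∈ a) → ∀ x : R, x ^ n ∈ a → (φ x) ^ n ∈ a := by
  induction n with
  | zero => intro a ha x hx; simpa using hx
  | succ n ih =>
    intro a ha x hx
    set c := a.colon (Ideal.span {x}) with hc
    have hcx : x ^ n ∈ c := by
      rw [hc, Ideal.mem_colon_span_singleton, ← pow_succ]
      exact hx
    have hcφ : (φ x) ^ n ∈ c := ih c (colon_aux φ hp hφ a ha _) x hcx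
    have h1' : (φ x) ^ n * x ∈ a := by
      rw [hc, Ideal.mem_colon_span_singleton] at hcφ
      exact hcφ
    have hq : 0 < p ^ e := pow_pos hp e
    have h2 : (φ x) ^ (n * p ^ e) * x ∈ a := by
      obtain ⟨k, hk⟩ : ∃ k, n * p ^ e = k + n := ⟨n * p ^ e - n, by
        have : n ≤ n * p ^ e := Nat.le_mul_of_pos_right n hq
        omega⟩
      rw [hk, pow_add, mul_assoc]
      exact Ideal.mul_mem_left a _ h1'
    have h3 : φ ((φ x ^ n) ^ (p ^ e) * x) ∈ a := by
      rw [← pow_mul]; exact ha _ h2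
    rw [hφ] at h3
    rw [pow_succ]
    exact h3

end Aux

/-- Basic stability properties of `φ`-compatible ideals: colon ideals, associated primes
and radicals of a compatible ideal are compatible. -/
theorem compatible_colon_assPrimes_radical (p e : ℕ) (hp : p.Prime) (he : 1 ≤ e)
    (R : Type*) [CommRing R] [CharP R p]
    (φ : R →+ R) (hφ : IsPLinearMap p e φ)
    (a : Ideal R) (ha : ∀ x ∈ a, φ x ∈ a) :
    (∀ b : Ideal R, ∀ x ∈ a.colon b, φ x ∈ a.colon b) ∧
    (IsNoetherianRing R →
      (∀ q : Ideal R, IsAssociatedPrime q (R ⧸ a) → ∀ x ∈ q, φ x ∈ q) ∧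
      (∀ x ∈ a.radical, φ x ∈ a.radical)) := by
  have hp0 : 0 < p := hp.pos
  refine ⟨colon_aux φ hp0 hφ a ha, fun _ => ⟨?_, ?_⟩⟩
  · intro q hq' x hx
    obtain ⟨hq, m, rfl⟩ := isAssociatedPrime_iff.mp hq'
    obtain ⟨r, rfl⟩ := Ideal.Quotient.mk_surjective m
    rw [Submodule.mem_colon_singleton, Submodule.mem_bot] at hx ⊢
    have hsm : ∀ s : R, s • (Ideal.Quotient.mk a) r = (Ideal.Quotient.mk a) (s * r) := by
      intro s; rfl
    have hxr : x * r ∈ a := by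
      rw [hsm, Ideal.Quotient.eq_zero_iff_mem] at hx; exact hx
    have : x ∈ a.colon (Ideal.span {r}) := Ideal.mem_colon_span_singleton.mpr hxr
    have := colon_aux φ hp0 hφ a ha (Ideal.span {r}) x this
    rw [Ideal.mem_colon_span_singleton] at this
    rw [hsm, Ideal.Quotient.eq_zero_iff_mem]
    exact this
  · intro x hx
    obtain ⟨n, hn⟩ := hx
    exact ⟨n, pow_aux φ hp0 hφ n a ha x hn⟩
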